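/- For y ∈ 2^ω let X_y = {s ∈ 2^{<ω} : |s| ≥ 1, s is not a prefix of y, but the string obtained from s by deleting its last bit is a prefix of y}. Then the map y ↦ X_y is injective, each X_y is a ⪯-antichain (hence X_y ∈ I_wf), and the set P = {X_y : y ∈ 2^ω} is strongly unbounded in (I_wf, ⊆): every infinite subset of P has no upper bound in I_wf. In particular, I_wf contains a strongly unbounded subset of cardinality 2^ℵ₀. -/

import Mathlib

/-- The length-`n` initial segment of an infinite binary sequence, as a binary string. -/
def initSeg (y : ℕ → Bool) (n : ℕ) : List Bool := List.ofFn (fun i : Fin n => y i)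

/-- `[X]`: the set of infinite branches hitting `X` infinitely often. -/
def branches (X : Set (List Bool)) : Set (ℕ → Bool) :=
  {y | ∀ N : ℕ, ∃ n ≥ N, initSeg y n ∈ X}

/-- The ideal of well-founded sets of binary strings: `X` with `[X] = ∅`. -/
def Iwf : Set (Set (List Bool)) := {X | branches X = ∅}

/-- `X_y`: strings that are not prefixes of `y` but whose truncation by one bit is. -/
def Xy (y : ℕ → Bool) : Set (List Bool) :=
  {s | 1 ≤ s.length ∧ s ≠ initSeg y s.length ∧ s.dropLast = initSeg y (s.length - 1)}

lemma initSeg_length (y : ℕ → Bool) (n : ℕ) : (initSeg y n).length = n := List.length_ofFn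

lemma initSeg_get (y : ℕ → Bool) {n i : ℕ} (h : i < n) :
    (initSeg y n)[i]'(by simp [initSeg_length, h]) = y i := by
  simp [initSeg]

lemma eq_initSeg_iff (y : ℕ → Bool) (s : List Bool) :
    s = initSeg y s.length ↔ ∀ i (h : i < s.length), s[i] = y i := by
  constructor
  · intro hs i h
    have := List.getElem_of_eq hs (i := i) h
    rwa [initSeg_get y h] at this
  · intro h
    apply List.ext_getElem (by simp [initSeg_length])
    intro i h1 h2
    rw [initSeg_get y h1]; exact h i h1

lemma initSeg_prefix (z : ℕ → Bool) {n m : ℕ} (h : n ≤ m) :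
    initSeg z n <+: initSeg z m := by
  rw [List.prefix_iff_eq_take]
  apply List.ext_getElem
  · simp [initSeg_length, h]
  · intro i h1 h2
    have hi : i < n := by simpa [initSeg_length] using h1
    rw [List.getElem_take, initSeg_get z hi, initSeg_get z (lt_of_lt_of_le hi h)]

lemma mem_Xy_of_firstDiff (y z : ℕ → Bool) (m : ℕ) (hm : y m ≠ z m)
    (hagree : ∀ i < m, y i = z i) : initSeg z (m+1) ∈ Xy y := by
  refine ⟨by simp [initSeg_length], ?_, ?_⟩
  · rw [initSeg_length]
    intro h
    have := List.getElem_of_eq h (i := m) (by simp [initSeg_length])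
    rw [initSeg_get z (Nat.lt_succ_self m), initSeg_get y (Nat.lt_succ_self m)] at this
    exact hm this.symm
  · rw [initSeg_length, Nat.add_sub_cancel]
    apply List.ext_getElem (by simp [initSeg_length])
    intro i h1 h2
    have hi : i < m := by simpa [initSeg_length] using h1
    rw [List.getElem_dropLast, initSeg_get z (Nat.lt_succ_of_lt hi), initSeg_get y hi]
    exact (hagree i hi).symm

lemma antichain_Xy (y : ℕ → Bool) : ∀ s ∈ Xy y, ∀ t ∈ Xy y, s <+: t → s = t := by
  intro s hs t ht hpre
  by_contra hne
  have hlen : s.length < t.length := by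
    rcases lt_or_eq_of_le hpre.length_le with h | h
    · exact h
    · exact absurd (List.IsPrefix.eq_of_length hpre h) hne
  apply hs.2.1
  rw [eq_initSeg_iff]
  intro i hi
  have hit : i < t.length - 1 := by omega
  have h1 : s[i] = t[i]'(by omega) := hpre.getElem hi
  have h2 : t.dropLast[i]'(by simp [List.length_dropLast]; omega) = t[i]'(by omega) :=
    List.getElem_dropLast ..
  have h3 := List.getElem_of_eq ht.2.2 (i := i) (by simp [List.length_dropLast]; omega)
  rw [initSeg_get y hit] at h3
  rw [h1, ← h2, h3]

lemma Xy_wf (y : ℕ → Bool) : ∀ z, z ∉ branches (Xy y) := by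
  intro z hz
  obtain ⟨n, hn1, hn⟩ := hz 1
  obtain ⟨m, hm1, hm⟩ := hz (n+1)
  have := antichain_Xy y _ hn _ hm (initSeg_prefix z (by omega))
  have := congrArg List.length this
  simp [initSeg_length] at this
  omega

lemma Xy_inj : Function.Injective Xy := by
  intro y y' h
  by_contra hne
  obtain ⟨k, hk⟩ := Function.ne_iff.mp hne
  have hex : ∃ k, y k ≠ y' k := ⟨k, hk⟩
  have hm : y (Nat.find hex) ≠ y' (Nat.find hex) := Nat.find_spec hex
  have hagree : ∀ i < Nat.find hex, y i = y' i := fun i hi => by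
    have := Nat.find_min hex hi; simpa using this
  have h1 : initSeg y' (Nat.find hex + 1) ∈ Xy y := mem_Xy_of_firstDiff y y' _ hm hagree
  rw [h] at h1
  exact h1.2.1 (by rw [initSeg_length])

lemma exists_condensation {Y : Set (ℕ → Bool)} (hY : Y.Infinite) :
    ∃ z, ∀ N, ∃ y ∈ Y, y ≠ z ∧ ∀ i < N, y i = z i := by
  obtain ⟨z, hz⟩ := hY.exists_accPt_principal
  refine ⟨z, fun N => ?_⟩
  rw [accPt_iff_nhds] at hz
  have hU : {w : ℕ → Bool | ∀ i < N, w i = z i} ∈ nhds z := by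
    have hopen : IsOpen {w : ℕ → Bool | ∀ i < N, w i = z i} := by
      have : {w : ℕ → Bool | ∀ i < N, w i = z i} =
          Set.pi (↑(Finset.range N)) (fun i => ({z i} : Set Bool)) := by
        ext w; simp [Set.mem_pi]
      rw [this]
      exact isOpen_set_pi (Finset.range N).finite_toSet (fun i _ => isOpen_discrete _)
    exact hopen.mem_nhds (fun i _ => rfl)
  obtain ⟨y, ⟨hy1, hy2⟩, hy3⟩ := hz _ hU
  exact ⟨y, hy2, hy3, hy1⟩

/-- The map `y ↦ X_y` is injective, each `X_y` is a `⪯`-antichain belonging to `I_wf`,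
and `{X_y : y ∈ 2^ω}` is strongly unbounded in `(I_wf, ⊆)`: every infinite subset has
no upper bound in `I_wf`.  In particular it is a strongly unbounded subset of `I_wf` of
cardinality continuum. -/
theorem Xy_strongly_unbounded :
    Function.Injective Xy ∧
    (∀ y : ℕ → Bool, (∀ s ∈ Xy y, ∀ t ∈ Xy y, s <+: t → s = t) ∧ Xy y ∈ Iwf) ∧
    (∀ S : Set (Set (List Bool)), S ⊆ Set.range Xy → S.Infinite →
      ¬ ∃ Z ∈ Iwf, ∀ X ∈ S, X ⊆ Z) ∧
    Cardinal.mk (Set.range Xy) = Cardinal.continuum := by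
  refine ⟨Xy_inj, fun y => ⟨antichain_Xy y, Set.eq_empty_iff_forall_notMem.mpr (Xy_wf y)⟩,
    ?_, ?_⟩
  · rintro S hSsub hSinf ⟨Z, hZ, hsub⟩
    have hY : (Xy ⁻¹' S).Infinite := by
      have himg : S ⊆ Xy '' (Xy ⁻¹' S) := by
        intro X hX
        obtain ⟨y, rfl⟩ := hSsub hX
        exact ⟨y, hX, rfl⟩
      exact ((hSinf.mono himg).of_image _)
    obtain ⟨z, hcond⟩ := exists_condensation hY
    have hzb : z ∈ branches Z := by
      intro N
      obtain ⟨y, hyS, hyz, hagree⟩ := hcond N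
      have hex : ∃ k, y k ≠ z k := Function.ne_iff.mp hyz
      have hm : y (Nat.find hex) ≠ z (Nat.find hex) := Nat.find_spec hex
      have hagree' : ∀ i < Nat.find hex, y i = z i := fun i hi => by
        have := Nat.find_min hex hi; simpa using this
      have hNle : N ≤ Nat.find hex := by
        by_contra hlt
        exact hm (hagree _ (by omega))
      refine ⟨Nat.find hex + 1, by omega, ?_⟩
      exact hsub _ hyS (mem_Xy_of_firstDiff y z _ hm hagree')
    have hZ' : branches Z = ∅ := hZ
    rw [Set.eq_empty_iff_forall_notMem] at hZ'
    exact hZ' z hzb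
  · rw [Cardinal.mk_range_eq Xy Xy_inj]
    simp [Cardinal.mk_arrow, Cardinal.two_power_aleph0]
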